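/- For all α, β with 0 < α ≤ 1 and (1−α)/2 ≤ β ≤ (1+α)/2, one has f_A(1−α, β) ≤ h(β) − h(α). -/

import Mathlib

/-- Binary entropy function (base-2 logs), with the convention `0 * log 0 = 0`. -/
noncomputable def binEnt (x : ℝ) : ℝ :=
  -(x * Real.logb 2 x) - (1 - x) * Real.logb 2 (1 - x)

/-- The spectral shape exponent of the accumulator:
`f_A(α,β) = α − h(β) + (1−α)·h((β−α/2)/(1−α))`. -/
noncomputable def fA (α β : ℝ) : ℝ :=
  α - binEnt β + (1 - α) * binEnt ((β - α / 2) / (1 - α))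

/-- The spectral shape exponent of the discrete derivative:
`f_D(α,β) = (1−α)·h(β/(2(1−α))) + α·h(β/(2α)) − h(α)`. -/
noncomputable def fD (α β : ℝ) : ℝ :=
  (1 - α) * binEnt (β / (2 * (1 - α))) + α * binEnt (β / (2 * α)) - binEnt α

/-- KL-type term inequality: `p - q ≤ p log p - p log q` for `p ≥ 0`, `q > 0`. -/
lemma klterm (p q : ℝ) (hp : 0 ≤ p) (hq : 0 < q) :
    p - q ≤ p * Real.log p - p * Real.log q := by
  rcases eq_or_lt_of_le hp with h | h
  · simp [← h]; linarith
  · have hqp : 0 < q / p := div_pos hq h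
    have := Real.log_le_sub_one_of_pos hqp
    rw [Real.log_div (ne_of_gt hq) (ne_of_gt h)] at this
    have h3 := mul_le_mul_of_nonneg_left this (le_of_lt h)
    have hpq : p * (q / p) = q := by field_simp
    rw [mul_sub, mul_sub, hpq] at h3
    linarith

/-- Scaling identity for `t log t`. -/
lemma split (t a : ℝ) (ht : 0 ≤ t) (ha : 0 < a) :
    a * ((t / a) * Real.log (t / a)) = t * Real.log t - t * Real.log a := by
  rcases eq_or_lt_of_le ht with h | h
  · simp [← h]
  · rw [Real.log_div (ne_of_gt h) (ne_of_gt ha)]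
    field_simp

lemma half (t : ℝ) (ht : 0 ≤ t) :
    2 * ((t / 2) * Real.log (t / 2)) = t * Real.log t - t * Real.log 2 := by
  have := split t 2 ht (by norm_num)
  linarith

lemma binEnt_mul_log2 (y : ℝ) :
    binEnt y * Real.log 2 = -(y * Real.log y) - (1 - y) * Real.log (1 - y) := by
  have h2 : Real.log 2 ≠ 0 := by
    have : (0:ℝ) < Real.log 2 := Real.log_pos (by norm_num)
    linarith
  simp only [binEnt, Real.logb]
  field_simp

/-- `f_A(1−α,β) ≤ h(β) − h(α)` for `0 < α ≤ 1` and `(1−α)/2 ≤ β ≤ (1+α)/2`. -/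
theorem fA_one_sub_le_entropy_diff (α β : ℝ) (hα0 : 0 < α) (hα1 : α ≤ 1)
    (hβl : (1 - α) / 2 ≤ β) (hβu : β ≤ (1 + α) / 2) :
    fA (1 - α) β ≤ binEnt β - binEnt α := by
  have h2 : (0:ℝ) < Real.log 2 := Real.log_pos (by norm_num)
  -- edge cases β = 0 and β = 1 (forcing α = 1)
  rcases eq_or_lt_of_le (show (0:ℝ) ≤ β by linarith) with hb0 | hb0
  · have hα : α = 1 := by linarith
    subst hα
    simp [fA, binEnt, ← hb0]
  rcases eq_or_lt_of_le (show β ≤ 1 by linarith) with hb1 | hb1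
  · have hα : α = 1 := by linarith
    subst hα
    simp [fA, binEnt, hb1]
  -- main case: 0 < β < 1
  set L := Real.log with hL
  set c : ℝ := (1 - α) / 2 with hc
  set p11 : ℝ := β - c with hp11
  set p00 : ℝ := α - p11 with hp00
  have hc0 : 0 ≤ c := by simp [hc]; linarith
  have hp11nn : 0 ≤ p11 := by simp [hp11, hc]; linarith
  have hp00nn : 0 ≤ p00 := by simp [hp00, hp11, hc]; linarith
  have hbne : β ≠ 0 := ne_of_gt hb0
  have hbne1 : (1 - β) ≠ 0 := by intro h; apply absurd hb1; linarith [sub_eq_zero.mp h]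
  have hb1' : 0 < 1 - β := by linarith
  -- KL divergence nonnegativity: key inequality
  have k1 := klterm p11 (β * β) hp11nn (mul_pos hb0 hb0)
  have k2 := klterm p00 ((1 - β) * (1 - β)) hp00nn (mul_pos hb1' hb1')
  have k3 := klterm c (β * (1 - β)) hc0 (mul_pos hb0 hb1')
  rw [Real.log_mul hbne hbne] at k1
  rw [Real.log_mul hbne1 hbne1] at k2
  rw [Real.log_mul hbne hbne1] at k3
  rw [mul_add] at k1 k2 k3
  have key : 2 * (β * L β) + 2 * ((1 - β) * L (1 - β)) ≤
      p11 * L p11 + p00 * L p00 + 2 * (c * L c) := by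
    have e1 : p11 + c = β := by simp [hp11]
    have e2 : p00 + c = 1 - β := by simp [hp00, hp11, hc]; ring
    have m1 : β * L β = p11 * L β + c * L β := by rw [← e1]; ring
    have m2 : (1 - β) * L (1 - β) = p00 * L (1 - β) + c * L (1 - β) := by
      rw [← e2]; ring
    have sq : β * β + (1 - β) * (1 - β) + 2 * (β * (1 - β)) = 1 := by ring
    have psum : p11 + p00 + 2 * c = 1 := by
      simp only [hp00, hp11, hc]; ring
    linarith [k1, k2, k3, m1, m2, sq, psum]
  -- identities to express everything with natural logs
  have I2β := binEnt_mul_log2 β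
  have I2α := binEnt_mul_log2 α
  have I3 : 2 * (c * L c) = (1 - α) * L (1 - α) - (1 - α) * L 2 := by
    have := half (1 - α) (by linarith)
    simpa [hc] using this
  have I1 : (α * binEnt (p11 / α)) * Real.log 2 =
      -(p11 * L p11) - (p00 * L p00) + α * L α := by
    have hx1 : 1 - p11 / α = p00 / α := by
      field_simp [hp00]
      exact hp00.symm
    have s1 := split p11 α hp11nn hα0
    have s2 := split p00 α hp00nn hα0
    have hsum : p11 + p00 = α := by simp [hp00]
    have hb := binEnt_mul_log2 (p11 / α)
    rw [hx1] at hb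
    calc (α * binEnt (p11 / α)) * Real.log 2
        = α * (binEnt (p11 / α) * Real.log 2) := by ring
      _ = α * (-(p11 / α * Real.log (p11 / α)) - p00 / α * Real.log (p00 / α)) := by
          rw [hb]
      _ = -(α * (p11 / α * Real.log (p11 / α))) - α * (p00 / α * Real.log (p00 / α)) := by
          ring
      _ = -(p11 * L p11) - (p00 * L p00) + α * L α := by
          rw [s1, s2]; simp only [hL]; linear_combination (Real.log α) * hsum
  -- reduce the goal
  rw [← mul_le_mul_iff_of_pos_right h2]
  have efa : fA (1 - α) β = (1 - α) - binEnt β + α * binEnt (p11 / α) := by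
    simp only [fA]
    have : 1 - (1 - α) = α := by ring
    rw [this]
  rw [efa]
  have expand : ((1 - α) - binEnt β + α * binEnt (p11 / α)) * Real.log 2
      = (1 - α) * Real.log 2 - binEnt β * Real.log 2 + (α * binEnt (p11 / α)) * Real.log 2 := by
    ring
  rw [expand, I1, I2β]
  have expand2 : (binEnt β - binEnt α) * Real.log 2
      = binEnt β * Real.log 2 - binEnt α * Real.log 2 := by ring
  rw [expand2, I2β, I2α]
  linarith [key, I3]
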